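/- Let G be a finite simple graph and T an induced subtree of G with |V(T)| − 1 = cc(G). Then Z_+(G) = |V(G)| − |V(T)| + 1; in particular, colouring one vertex of T and all vertices of V(G) \ V(T) black yields an optimal positive zero forcing set of G. -/

import Mathlib

/-! Basic definitions for zero forcing and positive (semidefinite) zero forcing. -/

variable {V : Type*}

/-- The standard zero forcing colour change rule: a black vertex `u` (i.e. `u ∈ S`)
forces its unique white neighbour `w`. -/
def ZFForce (G : SimpleGraph V) (S : Set V) (u w : V) : Prop :=
  u ∈ S ∧ w ∉ S ∧ G.Adj u w ∧ ∀ x, G.Adj u x → x ∉ S → x = w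

/-- `x` and `y` are joined by a path of `G` all of whose vertices avoid `S`,
i.e. they lie in the same connected component of `G − S`. -/
def ConnOutside (G : SimpleGraph V) (S : Set V) : V → V → Prop :=
  Relation.ReflTransGen fun x y => x ∉ S ∧ y ∉ S ∧ G.Adj x y

/-- The positive (semidefinite) colour change rule: a black vertex `u` forces a white
neighbour `w` provided `w` is the only white neighbour of `u` lying in the connected
component of `G − S` containing `w`. -/
def PSDForce (G : SimpleGraph V) (S : Set V) (u w : V) : Prop :=
  u ∈ S ∧ w ∉ S ∧ G.Adj u w ∧
    ∀ x, G.Adj u x → x ∉ S → ConnOutside G S x w → x = w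

/-- A list of forces, applied in order starting with black set `S`, is a valid sequence
of applications of the standard colour change rule. -/
def ZFValid (G : SimpleGraph V) : Set V → List (V × V) → Prop
  | _, [] => True
  | S, p :: L => ZFForce G S p.1 p.2 ∧ ZFValid G (insert p.2 S) L

/-- A list of forces, applied in order starting with black set `S`, is a valid sequence
of applications of the positive colour change rule. -/
def PSDValid (G : SimpleGraph V) : Set V → List (V × V) → Prop
  | _, [] => True
  | S, p :: L => PSDForce G S p.1 p.2 ∧ PSDValid G (insert p.2 S) L

/-- The black set resulting from performing the given list of forces. -/
def applyForces (S : Set V) (L : List (V × V)) : Set V :=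
  L.foldl (fun T p => insert p.2 T) S

/-- `B` is a zero forcing set: repeatedly applying the colour change rule starting from
`B` colours every vertex black. -/
def IsZeroForcingSet (G : SimpleGraph V) (B : Set V) : Prop :=
  ∃ L : List (V × V), ZFValid G B L ∧ applyForces B L = Set.univ

/-- `B` is a positive zero forcing set. -/
def IsPSDForcingSet (G : SimpleGraph V) (B : Set V) : Prop :=
  ∃ L : List (V × V), PSDValid G B L ∧ applyForces B L = Set.univ

/-- The zero forcing number `Z(G)`. -/
noncomputable def zfNum (G : SimpleGraph V) : ℕ :=
  sInf {n | ∃ B : Set V, B.ncard = n ∧ IsZeroForcingSet G B}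

/-- The positive (semidefinite) zero forcing number `Z₊(G)`. -/
noncomputable def psdNum (G : SimpleGraph V) : ℕ :=
  sInf {n | ∃ B : Set V, B.ncard = n ∧ IsPSDForcingSet G B}

/-- A clique cover of `G`: a finite family of cliques covering every edge of `G`. -/
def IsCliqueCover (G : SimpleGraph V) (𝒞 : Finset (Set V)) : Prop :=
  (∀ C ∈ 𝒞, G.IsClique C) ∧ ∀ u v, G.Adj u v → ∃ C ∈ 𝒞, u ∈ C ∧ v ∈ C

/-- The clique cover number `cc(G)`. -/
noncomputable def ccNum (G : SimpleGraph V) : ℕ :=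
  sInf {n | ∃ 𝒞 : Finset (Set V), 𝒞.card = n ∧ IsCliqueCover G 𝒞}

/-- A tree cover of `G`: a family of vertex-disjoint induced subtrees whose vertex sets
partition `V(G)`. -/
def IsTreeCover (G : SimpleGraph V) (𝒯 : Finset (Set V)) : Prop :=
  (∀ S ∈ 𝒯, (G.induce S).IsTree) ∧
    (∀ S ∈ 𝒯, ∀ T ∈ 𝒯, S ≠ T → Disjoint S T) ∧
    ∀ v : V, ∃ S ∈ 𝒯, v ∈ S

/-- The tree cover number `T(G)`. -/
noncomputable def tcNum (G : SimpleGraph V) : ℕ :=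
  sInf {n | ∃ 𝒯 : Finset (Set V), 𝒯.card = n ∧ IsTreeCover G 𝒯}

/-- A graph is chordal if it contains no induced cycle on four or more vertices. -/
def IsChordal (G : SimpleGraph V) : Prop :=
  ∀ n, 4 ≤ n → IsEmpty (SimpleGraph.cycleGraph n ↪g G)

/-- `C` is a maximal clique of `G`. -/
def IsMaxClique (G : SimpleGraph V) (C : Set V) : Prop :=
  G.IsClique C ∧ ∀ D : Set V, G.IsClique D → C ⊆ D → C = D

/-- A chordal graph is non-trivial if it has at least two distinct maximal cliques. -/
def NonTrivialChordal (G : SimpleGraph V) : Prop :=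
  IsChordal G ∧ ∃ C₁ C₂ : Set V, IsMaxClique G C₁ ∧ IsMaxClique G C₂ ∧ C₁ ≠ C₂

/-- A vertex is simplicial if its neighbourhood induces a clique. -/
def IsSimplicial (G : SimpleGraph V) (v : V) : Prop :=
  G.IsClique (G.neighborSet v)

section Aux
variable {V : Type*}

lemma exists_boundary {G : SimpleGraph V} {S : Set V} :
    ∀ {a b : V}, G.Walk a b → a ∈ S → b ∉ S →
      ∃ x ∈ S, ∃ y, y ∉ S ∧ G.Adj x y := by
  intro a b w
  induction w with
  | nil => intro h1 h2; exact absurd h1 h2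
  | @cons a c b h p ih =>
      intro ha hb
      by_cases hc : c ∈ S
      · exact ih hc hb
      · exact ⟨a, ha, c, hc, h⟩

lemma tree_force {G : SimpleGraph V} {t : Set V} (ht : (G.induce t).IsTree)
    {S : Set V} (hS : tᶜ ⊆ S) {u w : V} (hu : u ∈ S) (hut : u ∈ t)
    (hw : w ∉ S) (ha : G.Adj u w) : PSDForce G S u w := by
  have hmem : ∀ {z : V}, z ∉ S → z ∈ t := fun hz => by
    by_contra h; exact hz (hS h)
  refine ⟨hu, hw, ha, fun x hx hxS hconn => ?_⟩
  by_contra hne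
  have hxt : x ∈ t := hmem hxS
  have hwt : w ∈ t := hmem hw
  have key : ∀ {z : V}, ConnOutside G S z w → ∀ (hz : z ∈ t),
      ∃ p : (G.induce t).Walk ⟨z, hz⟩ ⟨w, hwt⟩, ∀ a ∈ p.support, (a : V) ∉ S := by
    intro z hc
    induction hc using Relation.ReflTransGen.head_induction_on with
    | refl => exact fun _ => ⟨SimpleGraph.Walk.nil, by simp [hw]⟩
    | head hab _ ih =>
        intro hz
        obtain ⟨haS, hbS, hadj⟩ := hab
        obtain ⟨p, hp⟩ := ih (hmem hbS)
        refine ⟨SimpleGraph.Walk.cons (by simpa using hadj) p, ?_⟩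
        intro a hA
        rcases List.mem_cons.mp (by simpa [SimpleGraph.Walk.support_cons] using hA) with h | h
        · subst h; exact haS
        · exact hp _ h
  obtain ⟨p, hp⟩ := key hconn hxt
  classical
  have hq : ((SimpleGraph.Walk.cons (u := (⟨x, hxt⟩ : t)) (v := ⟨u, hut⟩)
      (by simpa using hx.symm)
      (SimpleGraph.Walk.cons (v := ⟨w, hwt⟩) (by simpa using ha) SimpleGraph.Walk.nil)) :
      (G.induce t).Walk ⟨x, hxt⟩ ⟨w, hwt⟩).IsPath := by
    rw [SimpleGraph.Walk.isPath_def]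
    simp [Subtype.ext_iff]
    exact ⟨⟨fun h => hxS (h ▸ hu), hne⟩, fun h => hw (h ▸ hu)⟩
  have hpu := SimpleGraph.isAcyclic_iff_path_unique.mp ht.IsAcyclic (v := ⟨x, hxt⟩) (w := ⟨w, hwt⟩)
  have heq := hpu p.toPath ⟨_, hq⟩
  have humem : (⟨u, hut⟩ : t) ∈ ((p.toPath : (G.induce t).Path ⟨x, hxt⟩ ⟨w, hwt⟩) :
      (G.induce t).Walk ⟨x, hxt⟩ ⟨w, hwt⟩).support := by
    rw [heq]; simp
  exact hp _ (p.support_toPath_subset humem) hu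

lemma applyForces_cons (S : Set V) (p : V × V) (L : List (V × V)) :
    applyForces S (p :: L) = applyForces (insert p.2 S) L := rfl

lemma subset_applyForces (S : Set V) : ∀ L, S ⊆ applyForces S L := by
  intro L
  induction L generalizing S with
  | nil => exact subset_rfl
  | cons p L ih =>
      exact fun a ha => ih (insert p.2 S) (Set.mem_insert_of_mem _ ha)

lemma mem_valid {G : SimpleGraph V} :
    ∀ {L : List (V × V)} {S : Set V} {p : V × V}, PSDValid G S L → p ∈ L →
      ∃ S2, S ⊆ S2 ∧ PSDForce G S2 p.1 p.2 := by
  intro L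
  induction L with
  | nil => intro S p _ hp; simp at hp
  | cons q L ih =>
      intro S p hv hp
      rcases List.mem_cons.mp hp with h | h
      · exact ⟨S, subset_rfl, h ▸ hv.1⟩
      · obtain ⟨S2, hS2, hf⟩ := ih hv.2 h
        exact ⟨S2, (Set.subset_insert _ _).trans hS2, hf⟩

lemma length_le_card {G : SimpleGraph V} :
    ∀ (L : List (V × V)) (S : Set V) (𝒞 : Finset (Set V)), PSDValid G S L →
      (∀ C ∈ 𝒞, G.IsClique C) → (∀ p ∈ L, ∃ C ∈ 𝒞, p.1 ∈ C ∧ p.2 ∈ C) →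
      L.length ≤ 𝒞.card := by
  classical
  intro L
  induction L with
  | nil => intro S 𝒞 _ _ _; simp
  | cons q L ih =>
      intro S 𝒞 hv hclique hcov
      obtain ⟨C, hC𝒞, hq1, hq2⟩ := hcov q List.mem_cons_self
      obtain ⟨F1, hv'⟩ := hv
      have hcov' : ∀ p ∈ L, ∃ C' ∈ 𝒞.erase C, p.1 ∈ C' ∧ p.2 ∈ C' := by
        intro p hp
        obtain ⟨C2, hC2, hp1, hp2⟩ := hcov p (List.mem_cons_of_mem _ hp)
        refine ⟨C2, Finset.mem_erase.mpr ⟨?_, hC2⟩, hp1, hp2⟩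
        rintro rfl
        -- derive contradiction
        obtain ⟨S2, hS2, F2⟩ := mem_valid hv' hp
        have hw2S2 : p.2 ∉ S2 := F2.2.1
        have hw2S : p.2 ∉ S := fun h => hw2S2 (hS2 (Set.mem_insert_of_mem _ h))
        have hw1w2 : q.2 ≠ p.2 := fun h => hw2S2 (h ▸ hS2 (Set.mem_insert _ _))
        have hclC := hclique C2 hC2
        have hadj1 : G.Adj q.1 p.2 := hclC hq1 hp2 (fun h => hw2S (h ▸ F1.1))
        have hadj2 : G.Adj p.2 q.2 := hclC hp2 hq2 (fun h => hw1w2 h.symm)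
        exact hw1w2 ((F1.2.2.2 p.2 hadj1 hw2S
          (Relation.ReflTransGen.single ⟨hw2S, F1.2.1, hadj2⟩)).symm)
      have := ih (insert q.2 S) (𝒞.erase C) hv' (fun C' hC' => hclique C' (Finset.mem_erase.mp hC').2) hcov'
      have hcard : (𝒞.erase C).card + 1 = 𝒞.card := by
        rw [Finset.card_erase_of_mem hC𝒞]
        exact Nat.succ_pred_eq_of_pos (Finset.card_pos.mpr ⟨C, hC𝒞⟩)
      simp only [List.length_cons]
      omega

lemma card_le_of_forces [Fintype V] {G : SimpleGraph V} :
    ∀ (L : List (V × V)) (S : Set V), PSDValid G S L → applyForces S L = Set.univ →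
      Fintype.card V ≤ S.ncard + L.length := by
  intro L
  induction L with
  | nil =>
      intro S _ happ
      simp only [applyForces, List.foldl_nil] at happ
      simp [happ, Set.ncard_univ, Nat.card_eq_fintype_card]
  | cons q L ih =>
      intro S hv happ
      have h2 := ih (insert q.2 S) hv.2 happ
      have : (insert q.2 S).ncard = S.ncard + 1 :=
        Set.ncard_insert_of_notMem hv.1.2.1 (Set.toFinite S)
      simp only [List.length_cons]
      omega

lemma force_all [Fintype V] {G : SimpleGraph V} {t : Set V} (ht : (G.induce t).IsTree) :
    ∀ (n : ℕ) (S : Set V), Sᶜ.ncard = n → tᶜ ⊆ S → (∃ v ∈ t, v ∈ S) →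
      ∃ L, PSDValid G S L ∧ applyForces S L = Set.univ := by
  intro n
  induction n with
  | zero =>
      intro S h0 _ _
      have : Sᶜ = ∅ := (Set.ncard_eq_zero (Set.toFinite _)).mp h0
      have : S = Set.univ := by
        rw [← Set.compl_empty, ← this, compl_compl]
      exact ⟨[], trivial, by simpa [applyForces] using this⟩
  | succ n ih =>
      intro S hn hS ⟨v, hvt, hvS⟩
      have hne : Sᶜ.Nonempty := by
        rw [← Set.ncard_pos (Set.toFinite _)] at *; omega
      obtain ⟨b, hb⟩ := hne
      have hbt : b ∈ t := by by_contra h; exact hb (hS h)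
      -- find a boundary edge in the induced tree
      obtain ⟨wk⟩ := ht.isConnected (⟨v, hvt⟩ : t) ⟨b, hbt⟩
      obtain ⟨xx, hxx, yy, hyy, hadj⟩ :=
        exists_boundary (S := {a : t | (a : V) ∈ S}) wk hvS hb
      have hforce : PSDForce G S (xx : V) (yy : V) :=
        tree_force ht hS hxx xx.2 hyy (by simpa using hadj)
      have hcompl : (insert (yy : V) S)ᶜ.ncard = n := by
        have : (insert (yy : V) S)ᶜ = Sᶜ \ {(yy : V)} := by
          ext z; simp [Set.mem_compl_iff, and_comm]
        rw [this, Set.ncard_diff_singleton_of_mem (show (yy : V) ∈ Sᶜ from hyy), hn]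
        omega
      obtain ⟨L, hL, happ⟩ := ih (insert (yy : V) S) hcompl
        (hS.trans (Set.subset_insert _ _)) ⟨(yy : V), yy.2, Set.mem_insert _ _⟩
      exact ⟨((xx : V), (yy : V)) :: L, ⟨hforce, hL⟩, happ⟩

lemma exists_cover [Fintype V] (G : SimpleGraph V) : ∃ 𝒞 : Finset (Set V), IsCliqueCover G 𝒞 := by
  classical
  have hfin : {C : Set V | ∃ u v, G.Adj u v ∧ C = {u, v}}.Finite := by
    apply Set.Finite.subset (Set.finite_range (fun p : V × V => ({p.1, p.2} : Set V)))
    rintro C ⟨u, v, _, rfl⟩; exact ⟨(u, v), rfl⟩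
  refine ⟨hfin.toFinset, ?_, ?_⟩
  · intro C hC
    rw [Set.Finite.mem_toFinset] at hC
    obtain ⟨u, v, huv, rfl⟩ := hC
    exact SimpleGraph.isClique_pair.mpr (fun _ => huv)
  · intro u v huv
    exact ⟨{u, v}, (Set.Finite.mem_toFinset _).mpr ⟨u, v, huv, rfl⟩, by simp, by simp⟩

end Aux

/-- If `G` has an induced subtree `T` with `|V(T)| − 1 = cc(G)`,
then `Z₊(G) = |V(G)| − |V(T)| + 1`; in particular colouring any one vertex of `T`
together with all vertices outside `T` black yields an optimal positive zero forcing
set. -/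
theorem psdNum_of_induced_subtree {V : Type*} [Fintype V] (G : SimpleGraph V)
    (t : Set V) (ht : (G.induce t).IsTree) (hcc : t.ncard - 1 = ccNum G) :
    psdNum G = Fintype.card V - t.ncard + 1 ∧
      ∀ v ∈ t, IsPSDForcingSet G (insert v tᶜ) ∧ (insert v tᶜ).ncard = psdNum G := by
  classical
  have htne : t.Nonempty := by
    have := ht.isConnected.nonempty
    exact Set.nonempty_coe_sort.mp this
  have ht1 : 1 ≤ t.ncard := (Set.ncard_pos (Set.toFinite t)).mpr htne
  have hsum : t.ncard + tᶜ.ncard = Fintype.card V := by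
    rw [Set.ncard_add_ncard_compl, Nat.card_eq_fintype_card]
  -- each insert v tᶜ is a PSD forcing set
  have hforce : ∀ v ∈ t, IsPSDForcingSet G (insert v tᶜ) := by
    intro v hv
    obtain ⟨L, hL, happ⟩ := force_all ht (insert v tᶜ)ᶜ.ncard (insert v tᶜ) rfl
      (Set.subset_insert _ _) ⟨v, hv, Set.mem_insert _ _⟩
    exact ⟨L, hL, happ⟩
  have hncard : ∀ v ∈ t, (insert v tᶜ).ncard = Fintype.card V - t.ncard + 1 := by
    intro v hv
    rw [Set.ncard_insert_of_notMem (by simpa using hv) (Set.toFinite _)]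
    omega
  -- upper bound
  have hub : psdNum G ≤ Fintype.card V - t.ncard + 1 := by
    obtain ⟨v, hv⟩ := htne
    exact Nat.sInf_le ⟨insert v tᶜ, hncard v hv, hforce v hv⟩
  -- lower bound
  have hpne : {n | ∃ B : Set V, B.ncard = n ∧ IsPSDForcingSet G B}.Nonempty :=
    ⟨(Set.univ : Set V).ncard, Set.univ, rfl, [], trivial, rfl⟩
  obtain ⟨B, hB, L, hL, happ⟩ := Nat.sInf_mem hpne
  have hccne : {n | ∃ 𝒞 : Finset (Set V), 𝒞.card = n ∧ IsCliqueCover G 𝒞}.Nonempty := by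
    obtain ⟨𝒞, h𝒞⟩ := exists_cover G
    exact ⟨𝒞.card, 𝒞, rfl, h𝒞⟩
  obtain ⟨𝒞, h𝒞card, h𝒞⟩ := Nat.sInf_mem hccne
  have hlen : L.length ≤ ccNum G := by
    unfold ccNum
    rw [← h𝒞card]
    exact length_le_card L B 𝒞 hL h𝒞.1 (fun p hp => h𝒞.2 p.1 p.2 (mem_valid hL hp).choose_spec.2.2.2.1)
  have hcardle : Fintype.card V ≤ B.ncard + L.length := card_le_of_forces L B hL happ
  have hBn : B.ncard = psdNum G := hB
  have hccval : ccNum G = t.ncard - 1 := hcc.symm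
  have hmain : psdNum G = Fintype.card V - t.ncard + 1 := by omega
  exact ⟨hmain, fun v hv => ⟨hforce v hv, by rw [hncard v hv, hmain]⟩⟩
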